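/- Let p ∈ (1,∞), α ∈ ℝ, and let μ be the measure on (0,∞) given by dμ(x) = x dx. Then the weight w_α(x) = x^α belongs to the Muckenhoupt class A_p(μ) if and only if α ∈ (−2, 2p−2). -/

import Mathlib

open MeasureTheory Set

set_option maxHeartbeats 1000000

private lemma ap_key (t s : ℝ) (ht0 : 0 ≤ t) (ht1 : t ≤ 1) (hs : 0 < s) :
    1 - t ^ s ≤ max 1 s * (1 - t ^ 2) := by
  have ht2 : (t:ℝ) ^ 2 ≤ 1 := by nlinarith
  rcases le_or_gt s 2 with h2 | h2
  · have h : t ^ (2:ℕ) ≤ t ^ s := by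
      rcases eq_or_lt_of_le ht0 with rfl | ht
      · rw [Real.zero_rpow hs.ne']
        norm_num
      · calc (t:ℝ) ^ (2:ℕ) = t ^ ((2:ℕ):ℝ) := (Real.rpow_natCast t 2).symm
          _ ≤ t ^ s := Real.rpow_le_rpow_of_exponent_ge ht ht1 (by exact_mod_cast h2)
    have hm : (1:ℝ) ≤ max 1 s := le_max_left _ _
    nlinarith [h, hm, ht2]
  · have hb := one_add_mul_self_le_rpow_one_add (s := t - 1) (by linarith) (p := s) (by linarith)
    have h1t : (1:ℝ) + (t - 1) = t := by ring
    rw [h1t] at hb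
    have hmax : max 1 s = s := max_eq_right (by linarith)
    rw [hmax]
    -- hb : 1 + s * (t - 1) ≤ t ^ s, so 1 - t^s ≤ s * (1 - t) ≤ s * (1 - t^2)
    nlinarith [hb, sq_nonneg t, mul_nonneg ht0 (sub_nonneg.2 ht1)]

lemma key2 (a b s : ℝ) (ha : 0 ≤ a) (hab : a < b) (hs : 0 < s) :
    b ^ s - a ^ s ≤ max 1 s * b ^ (s - 2) * (b ^ 2 - a ^ 2) := by
  have hb : 0 < b := ha.trans_lt hab
  set t := a / b with htdef
  have ht0 : 0 ≤ t := div_nonneg ha hb.le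
  have ht1 : t ≤ 1 := (div_le_one hb).2 hab.le
  have hta : t * b = a := div_mul_cancel₀ a hb.ne'
  have h1 := ap_key t s ht0 ht1 hs
  have has : a ^ s = t ^ s * b ^ s := by
    rw [← hta, Real.mul_rpow ht0 hb.le]
  have ha2 : a ^ 2 = t ^ 2 * b ^ 2 := by rw [← hta]; ring
  have hbs : b ^ s = b ^ (s - 2) * b ^ 2 := by
    rw [← Real.rpow_natCast b 2, ← Real.rpow_add hb]
    norm_num
  rw [has, ha2, hbs]
  have hb2 : (0:ℝ) < b ^ 2 := by positivity
  have hbs2 : (0:ℝ) < b ^ (s - 2) := Real.rpow_pos_of_pos hb _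
  nlinarith [mul_le_mul_of_nonneg_left h1 (le_of_lt (mul_pos hbs2 hb2))]

lemma factor_le (a b s : ℝ) (ha : 0 ≤ a) (hab : a < b) (hs : 0 < s) :
    ((b ^ 2 - a ^ 2) / 2)⁻¹ * ((b ^ s - a ^ s) / s) ≤ 2 * max 1 s / s * b ^ (s - 2) := by
  have hb : 0 < b := ha.trans_lt hab
  have hD : (0:ℝ) < b ^ 2 - a ^ 2 := by nlinarith
  have h := key2 a b s ha hab hs
  calc ((b ^ 2 - a ^ 2) / 2)⁻¹ * ((b ^ s - a ^ s) / s)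
      ≤ ((b ^ 2 - a ^ 2) / 2)⁻¹ * ((max 1 s * b ^ (s - 2) * (b ^ 2 - a ^ 2)) / s) := by
        gcongr
    _ = 2 * max 1 s / s * b ^ (s - 2) := by
        field_simp

lemma factor_nonneg (a b s : ℝ) (ha : 0 ≤ a) (hab : a < b) (hs : 0 < s) :
    0 ≤ ((b ^ 2 - a ^ 2) / 2)⁻¹ * ((b ^ s - a ^ s) / s) := by
  have hb : 0 < b := ha.trans_lt hab
  have hD : (0:ℝ) < b ^ 2 - a ^ 2 := by nlinarith
  have : a ^ s ≤ b ^ s := Real.rpow_le_rpow ha hab.le hs.le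
  have h1 : (0:ℝ) ≤ b ^ s - a ^ s := by linarith
  positivity

lemma int_id' (a b : ℝ) (hab : a ≤ b) : ∫ x in Ioo a b, x = (b ^ 2 - a ^ 2) / 2 := by
  rw [← MeasureTheory.integral_Ioc_eq_integral_Ioo, ← intervalIntegral.integral_of_le hab,
    integral_id]

lemma int_pow (a b σ : ℝ) (ha : 0 ≤ a) (hab : a < b) (hσ : -2 < σ) :
    ∫ x in Ioo a b, x ^ σ * x = (b ^ (σ + 2) - a ^ (σ + 2)) / (σ + 2) := by
  rw [MeasureTheory.setIntegral_congr_fun measurableSet_Ioo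
    (g := fun x : ℝ => x ^ (σ + 1)) (fun x hx => by
      have hx0 : 0 < x := ha.trans_lt hx.1
      simp only
      rw [Real.rpow_add_one hx0.ne'])]
  rw [← MeasureTheory.integral_Ioc_eq_integral_Ioo, ← intervalIntegral.integral_of_le hab.le,
    integral_rpow (Or.inl (by linarith))]
  norm_num [add_assoc]

private lemma ap_mpr (p α : ℝ) (hp : 1 < p) (h1 : -2 < α) (h2 : α < 2 * p - 2) :
    (∃ A : ℝ, ∀ a b : ℝ, 0 ≤ a → a < b →
      ((∫ x in Ioo a b, x)⁻¹ * ∫ x in Ioo a b, x ^ α * x) *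
        ((∫ x in Ioo a b, x)⁻¹ * ∫ x in Ioo a b, x ^ (-α / (p - 1)) * x) ^ (p - 1) ≤ A) := by
  have hp1 : (0:ℝ) < p - 1 := by linarith
  have hs : (0:ℝ) < α + 2 := by linarith
  have hr : (0:ℝ) < -α / (p - 1) + 2 := by
    have : -α / (p - 1) > -2 := by
      rw [gt_iff_lt, lt_div_iff₀ hp1]; nlinarith
    linarith
  refine ⟨(2 * max 1 (α + 2) / (α + 2)) * (2 * max 1 (-α / (p - 1) + 2) / (-α / (p - 1) + 2)) ^ (p - 1),
    fun a b ha hab => ?_⟩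
  have hb : 0 < b := ha.trans_lt hab
  rw [int_id' a b hab.le, int_pow a b α ha hab h1,
    int_pow a b (-α / (p - 1)) ha hab (by linarith)]
  have F1 := factor_le a b (α + 2) ha hab hs
  have F2 := factor_le a b (-α / (p - 1) + 2) ha hab hr
  have F1n := factor_nonneg a b (α + 2) ha hab hs
  have F2n := factor_nonneg a b (-α / (p - 1) + 2) ha hab hr
  calc ((b ^ 2 - a ^ 2) / 2)⁻¹ * ((b ^ (α + 2) - a ^ (α + 2)) / (α + 2)) *
        (((b ^ 2 - a ^ 2) / 2)⁻¹ *
          ((b ^ (-α / (p - 1) + 2) - a ^ (-α / (p - 1) + 2)) / (-α / (p - 1) + 2))) ^ (p - 1)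
      ≤ (2 * max 1 (α + 2) / (α + 2) * b ^ (α + 2 - 2)) *
        (2 * max 1 (-α / (p - 1) + 2) / (-α / (p - 1) + 2) * b ^ (-α / (p - 1) + 2 - 2)) ^ (p - 1) := by
        apply mul_le_mul F1 (Real.rpow_le_rpow F2n F2 (by linarith)) (Real.rpow_nonneg F2n _)
        positivity
    _ = (2 * max 1 (α + 2) / (α + 2)) * (2 * max 1 (-α / (p - 1) + 2) / (-α / (p - 1) + 2)) ^ (p - 1) := by
        have hc2 : (0:ℝ) ≤ 2 * max 1 (-α / (p - 1) + 2) / (-α / (p - 1) + 2) := by positivity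
        rw [Real.mul_rpow hc2 (Real.rpow_nonneg hb.le _), ← Real.rpow_mul hb.le]
        have hexp : (b:ℝ) ^ (α + 2 - 2) * b ^ ((-α / (p - 1) + 2 - 2) * (p - 1)) = 1 := by
          rw [← Real.rpow_add hb]
          have : α + 2 - 2 + (-α / (p - 1) + 2 - 2) * (p - 1) = 0 := by
            field_simp
            ring
          rw [this, Real.rpow_zero]
        calc (2 * max 1 (α + 2) / (α + 2) * b ^ (α + 2 - 2)) *
              ((2 * max 1 (-α / (p - 1) + 2) / (-α / (p - 1) + 2)) ^ (p - 1) *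
                b ^ ((-α / (p - 1) + 2 - 2) * (p - 1)))
            = (2 * max 1 (α + 2) / (α + 2)) *
              (2 * max 1 (-α / (p - 1) + 2) / (-α / (p - 1) + 2)) ^ (p - 1) *
              (b ^ (α + 2 - 2) * b ^ ((-α / (p - 1) + 2 - 2) * (p - 1))) := by ring
          _ = _ := by rw [hexp, mul_one]


lemma integ (a σ : ℝ) (ha : 0 < a) : IntegrableOn (fun x : ℝ => x ^ σ * x) (Ioo a 1) volume := by
  have hc : ContinuousOn (fun x : ℝ => x ^ σ * x) (Icc a 1) := by
    apply ContinuousOn.mul _ continuousOn_id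
    apply ContinuousOn.rpow_const continuousOn_id
    intro x hx
    exact Or.inl (ne_of_gt (lt_of_lt_of_le ha hx.1))
  exact (hc.integrableOn_Icc).mono_set Ioo_subset_Icc_self

lemma lower1 (a σ : ℝ) (ha : 0 < a) (ha2 : a ≤ 1 / 2) (hσ : σ ≤ -2) :
    -Real.log a ≤ ∫ x in Ioo a 1, x ^ σ * x := by
  have ha1 : a < 1 := lt_of_le_of_lt ha2 (by norm_num)
  have hinv : IntegrableOn (fun x : ℝ => x⁻¹) (Ioo a 1) volume := by
    have hc : ContinuousOn (fun x : ℝ => x⁻¹) (Icc a 1) :=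
      ContinuousOn.inv₀ continuousOn_id (fun x hx => ne_of_gt (lt_of_lt_of_le ha hx.1))
    exact hc.integrableOn_Icc.mono_set Ioo_subset_Icc_self
  have hmono : ∀ x ∈ Ioo a 1, x⁻¹ ≤ x ^ σ * x := by
    intro x hx
    have hx0 : 0 < x := ha.trans hx.1
    have := Real.rpow_le_rpow_of_exponent_ge hx0 hx.2.le (by linarith : σ + 1 ≤ -1)
    rw [Real.rpow_neg_one, Real.rpow_add_one hx0.ne'] at this
    exact this
  have h := MeasureTheory.setIntegral_mono_on hinv (integ a σ ha) measurableSet_Ioo hmono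
  have heq : ∫ x in Ioo a 1, x⁻¹ = -Real.log a := by
    rw [← MeasureTheory.integral_Ioc_eq_integral_Ioo, ← intervalIntegral.integral_of_le ha1.le,
      integral_inv (by rw [Set.uIcc_of_le ha1.le]; intro h; exact absurd h.1 (by linarith))]
    rw [one_div, Real.log_inv]
  linarith [heq ▸ h]

lemma lower2 (a σ : ℝ) (ha : 0 < a) (ha2 : a ≤ 1 / 2) (hσ : 0 ≤ σ) :
    (1 / 2 : ℝ) ^ σ * (1 / 2) * (1 / 2) ≤ ∫ x in Ioo a 1, x ^ σ * x := by
  have hsub : Ioo (1/2 : ℝ) 1 ⊆ Ioo a 1 := Ioo_subset_Ioo ha2 le_rfl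
  have hint := integ a σ ha
  have hint2 : IntegrableOn (fun x : ℝ => x ^ σ * x) (Ioo (1/2 : ℝ) 1) volume :=
    hint.mono_set hsub
  have step1 : ∫ x in Ioo (1/2 : ℝ) 1, ((1/2 : ℝ) ^ σ * (1/2)) ≤ ∫ x in Ioo (1/2 : ℝ) 1, x ^ σ * x := by
    apply MeasureTheory.setIntegral_mono_on (integrableOn_const (s := Ioo (1/2:ℝ) 1) (μ := volume) (C := ((1/2:ℝ) ^ σ * (1/2))) measure_Ioo_lt_top.ne)
      hint2 measurableSet_Ioo
    intro x hx
    have hx0 : (0:ℝ) < 1/2 := by norm_num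
    exact mul_le_mul (Real.rpow_le_rpow (by norm_num) hx.1.le hσ) hx.1.le (by norm_num)
      (Real.rpow_nonneg (le_trans (by norm_num : (0:ℝ) ≤ 1/2) hx.1.le) _)
  have hconst : ∫ x in Ioo (1/2 : ℝ) 1, ((1/2 : ℝ) ^ σ * (1/2)) = (1/2 : ℝ) ^ σ * (1/2) * (1/2) := by
    rw [MeasureTheory.setIntegral_const, Real.volume_real_Ioo]
    norm_num
    ring
  have step2 : ∫ x in Ioo (1/2 : ℝ) 1, x ^ σ * x ≤ ∫ x in Ioo a 1, x ^ σ * x := by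
    apply MeasureTheory.setIntegral_mono_set hint _ (HasSubset.Subset.eventuallyLE hsub)
    filter_upwards [MeasureTheory.ae_restrict_mem measurableSet_Ioo] with x hx
    have hx0 : 0 < x := ha.trans hx.1
    positivity
  linarith [hconst ▸ step1, step2]

private lemma ap_mp (p α : ℝ) (hp : 1 < p)
    (h : ∃ A : ℝ, ∀ a b : ℝ, 0 ≤ a → a < b →
      ((∫ x in Ioo a b, x)⁻¹ * ∫ x in Ioo a b, x ^ α * x) *
        ((∫ x in Ioo a b, x)⁻¹ * ∫ x in Ioo a b, x ^ (-α / (p - 1)) * x) ^ (p - 1) ≤ A) :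
    -2 < α ∧ α < 2 * p - 2 := by
  obtain ⟨A, H⟩ := h
  have hp1 : (0:ℝ) < p - 1 := by linarith
  have h2e : (2:ℝ) ≤ Real.exp 1 := by
    have := Real.exp_one_gt_d9
    linarith
  constructor
  · by_contra hα
    push_neg at hα  -- hα : α ≤ -2
    have hβ0 : 0 ≤ -α / (p - 1) := div_nonneg (by linarith) hp1.le
    set c₂ : ℝ := (1 / 2 : ℝ) ^ (-α / (p - 1)) * (1 / 2) with hc₂def
    have hc₂ : 0 < c₂ := by positivity
    have hc' : 0 < c₂ ^ (p - 1) := Real.rpow_pos_of_pos hc₂ _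
    set B : ℝ := max (A + 1) 1 with hBdef
    have hB1 : (1:ℝ) ≤ B := le_max_right _ _
    have hB0 : (0:ℝ) < B := by linarith
    set T : ℝ := max 1 (B / (2 * c₂ ^ (p - 1))) with hTdef
    have hT1 : (1:ℝ) ≤ T := le_max_left _ _
    set a : ℝ := Real.exp (-T) with hadef
    have ha : 0 < a := Real.exp_pos _
    have ha2 : a ≤ 1 / 2 := by
      have h1 : a ≤ Real.exp (-1) := Real.exp_le_exp.2 (by linarith)
      rw [Real.exp_neg] at h1
      have h2 : (Real.exp 1)⁻¹ ≤ (2:ℝ)⁻¹ := inv_anti₀ (by norm_num) h2e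
      rw [show ((2:ℝ))⁻¹ = 1 / 2 by norm_num] at h2
      linarith
    have ha1 : a < 1 := lt_of_le_of_lt ha2 (by norm_num)
    have H' := H a 1 ha.le ha1
    rw [int_id' a 1 ha1.le] at H'
    have hD : (0:ℝ) < (1 ^ 2 - a ^ 2) / 2 := by nlinarith
    have hDle : ((1:ℝ) ^ 2 - a ^ 2) / 2 ≤ 1 / 2 := by nlinarith
    have hI0 : (2:ℝ) ≤ (((1:ℝ) ^ 2 - a ^ 2) / 2)⁻¹ := by
      have := inv_anti₀ hD hDle
      rw [show ((1:ℝ)/2)⁻¹ = 2 by norm_num] at this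
      exact this
    have hlog : -Real.log a = T := by rw [hadef, Real.log_exp]; ring
    have hI1 : T ≤ ∫ x in Ioo a 1, x ^ α * x := hlog ▸ lower1 a α ha ha2 hα
    have hI2 : c₂ * (1 / 2) ≤ ∫ x in Ioo a 1, x ^ (-α / (p - 1)) * x := by
      have := lower2 a (-α / (p - 1)) ha ha2 hβ0
      rw [hc₂def]; linarith
    have hT0 : (0:ℝ) ≤ T := by linarith
    have hf1 : 2 * T ≤ (((1:ℝ) ^ 2 - a ^ 2) / 2)⁻¹ * ∫ x in Ioo a 1, x ^ α * x :=
      mul_le_mul hI0 hI1 hT0 (by linarith)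
    have hf2b : c₂ ≤ (((1:ℝ) ^ 2 - a ^ 2) / 2)⁻¹ * ∫ x in Ioo a 1, x ^ (-α / (p - 1)) * x := by
      have := mul_le_mul hI0 hI2 (by positivity) (by linarith)
      linarith
    have hf2 : c₂ ^ (p - 1) ≤
        ((((1:ℝ) ^ 2 - a ^ 2) / 2)⁻¹ * ∫ x in Ioo a 1, x ^ (-α / (p - 1)) * x) ^ (p - 1) :=
      Real.rpow_le_rpow hc₂.le hf2b (by linarith)
    have hQ : 2 * T * c₂ ^ (p - 1) ≤ A := by
      refine le_trans (mul_le_mul hf1 hf2 hc'.le (by linarith)) H'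
    have hTB : B / (2 * c₂ ^ (p - 1)) ≤ T := le_max_right _ _
    rw [div_le_iff₀ (by positivity)] at hTB
    have : A + 1 ≤ B := le_max_left _ _
    nlinarith
  · by_contra hα
    push_neg at hα  -- hα : 2 * p - 2 ≤ α
    have hα0 : (0:ℝ) ≤ α := by linarith
    have hσ2 : -α / (p - 1) ≤ -2 := by
      rw [div_le_iff₀ hp1]; linarith
    set c₁ : ℝ := (1 / 2 : ℝ) ^ α * (1 / 2) with hc₁def
    have hc₁ : 0 < c₁ := by positivity
    set B : ℝ := max (A + 1) 1 with hBdef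
    have hB1 : (1:ℝ) ≤ B := le_max_right _ _
    have hB0 : (0:ℝ) < B := by linarith
    set T : ℝ := max 1 ((B / c₁) ^ (p - 1)⁻¹ / 2) with hTdef
    have hT1 : (1:ℝ) ≤ T := le_max_left _ _
    set a : ℝ := Real.exp (-T) with hadef
    have ha : 0 < a := Real.exp_pos _
    have ha2 : a ≤ 1 / 2 := by
      have h1 : a ≤ Real.exp (-1) := Real.exp_le_exp.2 (by linarith)
      rw [Real.exp_neg] at h1
      have h2 : (Real.exp 1)⁻¹ ≤ (2:ℝ)⁻¹ := inv_anti₀ (by norm_num) h2e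
      rw [show ((2:ℝ))⁻¹ = 1 / 2 by norm_num] at h2
      linarith
    have ha1 : a < 1 := lt_of_le_of_lt ha2 (by norm_num)
    have H' := H a 1 ha.le ha1
    rw [int_id' a 1 ha1.le] at H'
    have hD : (0:ℝ) < (1 ^ 2 - a ^ 2) / 2 := by nlinarith
    have hDle : ((1:ℝ) ^ 2 - a ^ 2) / 2 ≤ 1 / 2 := by nlinarith
    have hI0 : (2:ℝ) ≤ (((1:ℝ) ^ 2 - a ^ 2) / 2)⁻¹ := by
      have := inv_anti₀ hD hDle
      rw [show ((1:ℝ)/2)⁻¹ = 2 by norm_num] at this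
      exact this
    have hlog : -Real.log a = T := by rw [hadef, Real.log_exp]; ring
    have hI2 : T ≤ ∫ x in Ioo a 1, x ^ (-α / (p - 1)) * x :=
      hlog ▸ lower1 a (-α / (p - 1)) ha ha2 hσ2
    have hI1 : c₁ * (1 / 2) ≤ ∫ x in Ioo a 1, x ^ α * x := by
      have := lower2 a α ha ha2 hα0
      rw [hc₁def]; linarith
    have hT0 : (0:ℝ) ≤ T := by linarith
    have hf1 : c₁ ≤ (((1:ℝ) ^ 2 - a ^ 2) / 2)⁻¹ * ∫ x in Ioo a 1, x ^ α * x := by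
      have := mul_le_mul hI0 hI1 (by positivity) (by linarith)
      linarith
    have hf2b : 2 * T ≤ (((1:ℝ) ^ 2 - a ^ 2) / 2)⁻¹ * ∫ x in Ioo a 1, x ^ (-α / (p - 1)) * x :=
      mul_le_mul hI0 hI2 hT0 (by linarith)
    have hf2 : (2 * T) ^ (p - 1) ≤
        ((((1:ℝ) ^ 2 - a ^ 2) / 2)⁻¹ * ∫ x in Ioo a 1, x ^ (-α / (p - 1)) * x) ^ (p - 1) :=
      Real.rpow_le_rpow (by linarith : (0:ℝ) ≤ 2 * T) hf2b (by linarith)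
    have hQ : c₁ * (2 * T) ^ (p - 1) ≤ A :=
      le_trans (mul_le_mul hf1 hf2 (Real.rpow_nonneg (by linarith : (0:ℝ) ≤ 2 * T) _) (by linarith)) H'
    have hTB : (B / c₁) ^ (p - 1)⁻¹ ≤ 2 * T := by
      have := le_max_right (1:ℝ) ((B / c₁) ^ (p - 1)⁻¹ / 2)
      rw [← hTdef] at this
      linarith
    have hpow : B / c₁ ≤ (2 * T) ^ (p - 1) := by
      have h := Real.rpow_le_rpow (Real.rpow_nonneg (by positivity) _) hTB hp1.le
      rwa [← Real.rpow_mul (by positivity), inv_mul_cancel₀ hp1.ne',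
        Real.rpow_one] at h
    have hBle : B ≤ c₁ * (2 * T) ^ (p - 1) := by
      have := mul_le_mul_of_nonneg_left hpow hc₁.le
      rwa [mul_div_cancel₀ _ hc₁.ne'] at this
    have : A + 1 ≤ B := le_max_left _ _
    linarith

theorem stmt_12 (p α : ℝ) (hp : 1 < p) :
    (∃ A : ℝ, ∀ a b : ℝ, 0 ≤ a → a < b →
      ((∫ x in Ioo a b, x)⁻¹ * ∫ x in Ioo a b, x ^ α * x) *
        ((∫ x in Ioo a b, x)⁻¹ * ∫ x in Ioo a b, x ^ (-α / (p - 1)) * x) ^ (p - 1) ≤ A)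
    ↔ (-2 < α ∧ α < 2 * p - 2) := by
  exact ⟨ap_mp p α hp, fun ⟨h1, h2⟩ => ap_mpr p α hp h1 h2⟩
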